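/- Let n, p be positive natural numbers, let φ : Fin n → Fin p → ℝ and m : Fin n → Fin p → ℝ be given arrays, and for each i let hᵢ : ℝ → ℝ be convex and differentiable. Fix λ ≥ 0 and a real q > 1, and define L(β) = (1/n)·Σᵢ ( hᵢ(Σⱼ φᵢⱼ βⱼ) − Σⱼ mᵢⱼ βⱼ ) + (λ/q)·Σⱼ |βⱼ|^q for β ∈ ℝᵖ. If β̂ is a global minimizer of L and α̂ᵢ = hᵢ'(Σⱼ φᵢⱼ β̂ⱼ), then for every j, (1/n)·Σᵢ ( α̂ᵢ φᵢⱼ − mᵢⱼ ) = −λ · sign(β̂ⱼ) · |β̂ⱼ|^{q−1}; in particular | (1/n)·Σᵢ ( α̂ᵢ φᵢⱼ − mᵢⱼ ) | = λ · |β̂ⱼ|^{q−1}. -/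

import Mathlib

lemma myHasDerivAt_abs_rpow {q : ℝ} (hq : 1 < q) (t : ℝ) :
    HasDerivAt (fun s : ℝ => |s| ^ q) (q * Real.sign t * |t| ^ (q - 1)) t := by
  have := hasDerivAt_abs_rpow t hq
  convert this using 1
  rcases lt_trichotomy t 0 with h | rfl | h
  · rw [Real.sign_of_neg h, abs_of_neg h]
    rw [show q - 1 = (q - 2) + 1 by ring, Real.rpow_add (by linarith), Real.rpow_one]
    ring
  · simp
  · rw [Real.sign_of_pos h, abs_of_pos h]
    rw [show q - 1 = (q - 2) + 1 by ring, Real.rpow_add h, Real.rpow_one]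
    ring

/-- Automatic regressor balancing with ℓ^q penalty, `q > 1`: the sample moment
imbalance in coordinate `j` equals `−λ · sign(β̂ⱼ) · |β̂ⱼ|^(q−1)`, and in absolute
value equals `λ · |β̂ⱼ|^(q−1)`. -/
theorem arb_lq_balancing
    (n p : ℕ) (hn : 0 < n) (hp : 0 < p)
    (φ m : Fin n → Fin p → ℝ)
    (h : Fin n → ℝ → ℝ)
    (hconv : ∀ i, ConvexOn ℝ Set.univ (h i))
    (hdiff : ∀ i, Differentiable ℝ (h i))
    (lam : ℝ) (hlam : 0 ≤ lam)
    (q : ℝ) (hq : 1 < q)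
    (L : (Fin p → ℝ) → ℝ)
    (hL : ∀ β : Fin p → ℝ,
      L β = (1 / (n : ℝ)) * ∑ i, (h i (∑ j, φ i j * β j) - ∑ j, m i j * β j)
            + (lam / q) * ∑ j, |β j| ^ q)
    (βhat : Fin p → ℝ)
    (hmin : ∀ β : Fin p → ℝ, L βhat ≤ L β)
    (αhat : Fin n → ℝ)
    (hαhat : ∀ i, αhat i = deriv (h i) (∑ j, φ i j * βhat j)) :
    ∀ j : Fin p,
      (1 / (n : ℝ)) * ∑ i, (αhat i * φ i j - m i j)
        = -lam * Real.sign (βhat j) * |βhat j| ^ (q - 1) ∧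
      |(1 / (n : ℝ)) * ∑ i, (αhat i * φ i j - m i j)|
        = lam * |βhat j| ^ (q - 1) := by
  intro j
  have hq0 : q ≠ 0 := by linarith
  set t0 := βhat j with ht0
  -- sums over updated vector
  have hsum1 : ∀ (c : Fin p → ℝ) (t : ℝ),
      ∑ k, c k * Function.update βhat j t k
        = c j * t + ∑ k ∈ Finset.univ.erase j, c k * βhat k := by
    intro c t
    rw [← Finset.add_sum_erase _ (fun k => c k * Function.update βhat j t k)
      (Finset.mem_univ j), Function.update_self]
    congr 1
    exact Finset.sum_congr rfl fun k hk => by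
      rw [Function.update_of_ne (Finset.ne_of_mem_erase hk)]
  have hsum2 : ∀ t : ℝ,
      ∑ k, |Function.update βhat j t k| ^ q
        = |t| ^ q + ∑ k ∈ Finset.univ.erase j, |βhat k| ^ q := by
    intro t
    rw [← Finset.add_sum_erase _ (fun k => |Function.update βhat j t k| ^ q)
      (Finset.mem_univ j), Function.update_self]
    congr 1
    exact Finset.sum_congr rfl fun k hk => by
      rw [Function.update_of_ne (Finset.ne_of_mem_erase hk)]
  have hfun : (fun t => L (Function.update βhat j t)) =
      fun t => (1 / (n : ℝ)) * ∑ i,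
          (h i (φ i j * t + ∑ k ∈ Finset.univ.erase j, φ i k * βhat k)
            - (m i j * t + ∑ k ∈ Finset.univ.erase j, m i k * βhat k))
        + (lam / q) * (|t| ^ q + ∑ k ∈ Finset.univ.erase j, |βhat k| ^ q) := by
    funext t
    rw [hL]
    simp only [hsum1, hsum2]
  -- derivative of g at t0
  have hD : HasDerivAt (fun t => L (Function.update βhat j t))
      ((1 / (n : ℝ)) * ∑ i, (αhat i * φ i j - m i j)
        + (lam / q) * (q * Real.sign t0 * |t0| ^ (q - 1))) t0 := by
    rw [hfun]
    have hpart1 : ∀ i : Fin n, HasDerivAt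
        (fun t => h i (φ i j * t + ∑ k ∈ Finset.univ.erase j, φ i k * βhat k)
          - (m i j * t + ∑ k ∈ Finset.univ.erase j, m i k * βhat k))
        (αhat i * φ i j - m i j) t0 := by
      intro i
      have hs : HasDerivAt
          (fun t => φ i j * t + ∑ k ∈ Finset.univ.erase j, φ i k * βhat k)
          (φ i j) t0 := by
        simpa using ((hasDerivAt_id t0).const_mul (φ i j)).add_const
          (∑ k ∈ Finset.univ.erase j, φ i k * βhat k)
      have heq : φ i j * t0 + ∑ k ∈ Finset.univ.erase j, φ i k * βhat k
          = ∑ k, φ i k * βhat k := by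
        rw [← hsum1 (φ i) t0, ht0, Function.update_eq_self]
      have hh : HasDerivAt (h i) (αhat i)
          (φ i j * t0 + ∑ k ∈ Finset.univ.erase j, φ i k * βhat k) := by
        rw [heq, hαhat i]
        exact (hdiff i _).hasDerivAt
      have hm : HasDerivAt
          (fun t => m i j * t + ∑ k ∈ Finset.univ.erase j, m i k * βhat k)
          (m i j) t0 := by
        simpa using ((hasDerivAt_id t0).const_mul (m i j)).add_const
          (∑ k ∈ Finset.univ.erase j, m i k * βhat k)
      exact (hh.comp t0 hs).sub hm
    have hsumD : HasDerivAt
        (fun t => ∑ i, (h i (φ i j * t + ∑ k ∈ Finset.univ.erase j, φ i k * βhat k)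
          - (m i j * t + ∑ k ∈ Finset.univ.erase j, m i k * βhat k)))
        (∑ i, (αhat i * φ i j - m i j)) t0 :=
      HasDerivAt.fun_sum fun i _ => hpart1 i
    have hpen : HasDerivAt
        (fun t => |t| ^ q + ∑ k ∈ Finset.univ.erase j, |βhat k| ^ q)
        (q * Real.sign t0 * |t0| ^ (q - 1)) t0 :=
      (myHasDerivAt_abs_rpow hq t0).add_const _
    exact (hsumD.const_mul _).add (hpen.const_mul _)
  have hlocal : IsLocalMin (fun t => L (Function.update βhat j t)) t0 := by
    apply Filter.Eventually.of_forall
    intro t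
    simpa [ht0, Function.update_eq_self] using hmin (Function.update βhat j t)
  have hzero := hlocal.hasDerivAt_eq_zero hD
  have hfirst : (1 / (n : ℝ)) * ∑ i, (αhat i * φ i j - m i j)
      = -lam * Real.sign t0 * |t0| ^ (q - 1) := by
    have hlq : (lam / q) * (q * Real.sign t0 * |t0| ^ (q - 1))
        = lam * Real.sign t0 * |t0| ^ (q - 1) := by
      field_simp
    rw [hlq] at hzero
    linarith
  refine ⟨hfirst, ?_⟩
  rw [hfirst]
  rcases lt_trichotomy t0 0 with h0 | h0 | h0
  · rw [Real.sign_of_neg h0]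
    rw [abs_of_nonneg (by nlinarith [Real.rpow_nonneg (abs_nonneg t0) (q - 1)])]
    ring
  · rw [h0]
    simp [Real.zero_rpow (show q - 1 ≠ 0 by intro hc; linarith [sub_eq_zero.mp hc])]
  · rw [Real.sign_of_pos h0]
    rw [abs_of_nonpos (by nlinarith [Real.rpow_nonneg (abs_nonneg t0) (q - 1)])]
    ring
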